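/- Fix d ∈ ℝ with d ∉ {0,1,2}, and constants C₂, C₃ with C₃ ≠ 0. On U = {(u¹,u²,u³) ∈ ℝ³ : u² > 0}, let η(u) be the symmetric matrix (u²)^{−d}·[[0, C₂ − C₃d·u³/u², C₃],[C₂ − C₃d·u³/u², C₃, 0],[C₃, 0, 0]], and define x : U → ℝ³ by x¹ = u¹, x² = (u²)^{−d}u³ + C₂(u²)^{1−d}/(C₃(1−d)), x³ = (2/(2−d))(u²)^{(2−d)/2}. Let J(u) be the Jacobian matrix of x at u and let G be the constant matrix [[0,C₃,0],[C₃,0,0],[0,0,C₃]]. Then J(u)ᵀ G J(u) = η(u) for all u ∈ U; that is, (x¹,x²,x³) are flat coordinates for the metric η. -/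

import Mathlib

open Matrix

/-- Partial derivative of `g : (Fin n → ℝ) → ℝ` with respect to the `i`-th coordinate. -/
noncomputable def pd {n : ℕ} (g : (Fin n → ℝ) → ℝ) (i : Fin n) (u : Fin n → ℝ) : ℝ :=
  deriv (fun t => g (Function.update u i t)) (u i)

/-- The flat coordinates `x¹ = u¹`, `x² = (u²)^{−d}u³ + C₂(u²)^{1−d}/(C₃(1−d))`,
`x³ = (2/(2−d))(u²)^{(2−d)/2}` (0-based indices: `u 0 = u¹`, `u 1 = u²`, `u 2 = u³`). -/
noncomputable def flatCoord3 (d C₂ C₃ : ℝ) (u : Fin 3 → ℝ) : Fin 3 → ℝ :=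
  ![u 0,
    (u 1) ^ (-d) * u 2 + C₂ * (u 1) ^ (1 - d) / (C₃ * (1 - d)),
    2 / (2 - d) * (u 1) ^ ((2 - d) / 2)]

/-- The Jacobian matrix `J(u)ᵢⱼ = ∂xⁱ/∂uʲ` of `flatCoord3 d C₂ C₃` at `u`. -/
noncomputable def jac3 (d C₂ C₃ : ℝ) (u : Fin 3 → ℝ) : Matrix (Fin 3) (Fin 3) ℝ :=
  Matrix.of fun i j => pd (fun v => flatCoord3 d C₂ C₃ v i) j u

/-- The Jacobian of `flatCoord3` computed explicitly. -/
lemma jac3_eq (d C₂ C₃ : ℝ) (u : Fin 3 → ℝ) (hu : 0 < u 1) :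
    jac3 d C₂ C₃ u =
      !![1, 0, 0;
         0, -d * (u 1) ^ (-d - 1) * u 2
              + C₂ * ((1 - d) * (u 1) ^ (1 - d - 1)) / (C₃ * (1 - d)),
           (u 1) ^ (-d);
         0, 2 / (2 - d) * ((2 - d) / 2 * (u 1) ^ ((2 - d) / 2 - 1)), 0] := by
  have hne := hu.ne'
  ext i j
  fin_cases i <;> fin_cases j
  · show deriv (fun t => flatCoord3 d C₂ C₃ (Function.update u 0 t) 0) (u 0) = 1
    rw [show (fun t => flatCoord3 d C₂ C₃ (Function.update u 0 t) 0) = fun t : ℝ => t from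
      funext fun t => by simp [flatCoord3]]
    exact deriv_id _
  · show deriv (fun t => flatCoord3 d C₂ C₃ (Function.update u 1 t) 0) (u 1) = 0
    rw [show (fun t => flatCoord3 d C₂ C₃ (Function.update u 1 t) 0) = fun _ : ℝ => u 0 from
      funext fun t => by simp [flatCoord3, Function.update_apply]]
    exact deriv_const _ _
  · show deriv (fun t => flatCoord3 d C₂ C₃ (Function.update u 2 t) 0) (u 2) = 0
    rw [show (fun t => flatCoord3 d C₂ C₃ (Function.update u 2 t) 0) = fun _ : ℝ => u 0 from
      funext fun t => by simp [flatCoord3, Function.update_apply]]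
    exact deriv_const _ _
  · show deriv (fun t => flatCoord3 d C₂ C₃ (Function.update u 0 t) 1) (u 0) = 0
    rw [show (fun t => flatCoord3 d C₂ C₃ (Function.update u 0 t) 1)
        = fun _ : ℝ => (u 1) ^ (-d) * u 2 + C₂ * (u 1) ^ (1 - d) / (C₃ * (1 - d)) from
      funext fun t => by simp [flatCoord3, Function.update_apply]]
    exact deriv_const _ _
  · show deriv (fun t => flatCoord3 d C₂ C₃ (Function.update u 1 t) 1) (u 1) = _
    rw [show (fun t => flatCoord3 d C₂ C₃ (Function.update u 1 t) 1)
        = fun t : ℝ => t ^ (-d) * u 2 + C₂ * t ^ (1 - d) / (C₃ * (1 - d)) from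
      funext fun t => by simp [flatCoord3, Function.update_apply]]
    exact (((Real.hasDerivAt_rpow_const (p := -d) (Or.inl hne)).mul_const (u 2)).add
      (((Real.hasDerivAt_rpow_const (p := 1 - d) (Or.inl hne)).const_mul C₂).div_const
        (C₃ * (1 - d)))).deriv
  · show deriv (fun t => flatCoord3 d C₂ C₃ (Function.update u 2 t) 1) (u 2) = _
    rw [show (fun t => flatCoord3 d C₂ C₃ (Function.update u 2 t) 1)
        = fun t : ℝ => (u 1) ^ (-d) * t + C₂ * (u 1) ^ (1 - d) / (C₃ * (1 - d)) from
      funext fun t => by simp [flatCoord3, Function.update_apply]]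
    simpa using (((hasDerivAt_id (u 2)).const_mul ((u 1) ^ (-d))).add_const
      (C₂ * (u 1) ^ (1 - d) / (C₃ * (1 - d)))).deriv
  · show deriv (fun t => flatCoord3 d C₂ C₃ (Function.update u 0 t) 2) (u 0) = 0
    rw [show (fun t => flatCoord3 d C₂ C₃ (Function.update u 0 t) 2)
        = fun _ : ℝ => 2 / (2 - d) * (u 1) ^ ((2 - d) / 2) from
      funext fun t => by simp [flatCoord3, Function.update_apply]]
    exact deriv_const _ _
  · show deriv (fun t => flatCoord3 d C₂ C₃ (Function.update u 1 t) 2) (u 1) = _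
    rw [show (fun t => flatCoord3 d C₂ C₃ (Function.update u 1 t) 2)
        = fun t : ℝ => 2 / (2 - d) * t ^ ((2 - d) / 2) from
      funext fun t => by simp [flatCoord3, Function.update_apply]]
    exact ((Real.hasDerivAt_rpow_const (p := (2 - d) / 2) (Or.inl hne)).const_mul
      (2 / (2 - d))).deriv
  · show deriv (fun t => flatCoord3 d C₂ C₃ (Function.update u 2 t) 2) (u 2) = 0
    rw [show (fun t => flatCoord3 d C₂ C₃ (Function.update u 2 t) 2)
        = fun _ : ℝ => 2 / (2 - d) * (u 1) ^ ((2 - d) / 2) from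
      funext fun t => by simp [flatCoord3, Function.update_apply]]
    exact deriv_const _ _

/-- for `d ∉ {0,1,2}` and `C₃ ≠ 0`, the coordinates `flatCoord3` are flat
coordinates for the metric
`η = (u²)^{−d}·[[0, C₂ − C₃d·u³/u², C₃],[C₂ − C₃d·u³/u², C₃, 0],[C₃, 0, 0]]`:
`J(u)ᵀ G J(u) = η(u)` with `G = [[0,C₃,0],[C₃,0,0],[0,0,C₃]]`. -/
theorem stmt_10 (d C₂ C₃ : ℝ) (hd0 : d ≠ 0) (hd1 : d ≠ 1) (hd2 : d ≠ 2)
    (hC₃ : C₃ ≠ 0) :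
    ∀ u : Fin 3 → ℝ, 0 < u 1 →
      (jac3 d C₂ C₃ u)ᵀ * !![0, C₃, 0; C₃, 0, 0; 0, 0, C₃] * jac3 d C₂ C₃ u
        = (u 1) ^ (-d) •
            !![0, C₂ - C₃ * d * u 2 / u 1, C₃;
               C₂ - C₃ * d * u 2 / u 1, C₃, 0;
               C₃, 0, 0] := by
  intro u hu
  have hne := hu.ne'
  set b : ℝ := -d * (u 1) ^ (-d - 1) * u 2
      + C₂ * ((1 - d) * (u 1) ^ (1 - d - 1)) / (C₃ * (1 - d)) with hb
  set a : ℝ := (u 1) ^ (-d) with ha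
  set c : ℝ := 2 / (2 - d) * ((2 - d) / 2 * (u 1) ^ ((2 - d) / 2 - 1)) with hc
  rw [jac3_eq d C₂ C₃ u hu]
  have h1d : (1 : ℝ) - d ≠ 0 := by intro h; apply hd1; linarith
  have h2d : (2 : ℝ) - d ≠ 0 := by intro h; apply hd2; linarith
  have e1 : (u 1) ^ (-d - 1) = (u 1) ^ (-d) * (u 1)⁻¹ := by
    rw [show -d - 1 = -d + (-1) by ring, Real.rpow_add hu, Real.rpow_neg_one]
  have e2 : (u 1) ^ (1 - d - 1) = (u 1) ^ (-d) := by norm_num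
  have haux : C₃ * (1 - d) ≠ 0 := mul_ne_zero hC₃ h1d
  have haux2 : C₃ - C₃ * d ≠ 0 := by intro h; apply haux; linear_combination h
  have haux3 : -(d * C₃) + C₃ ≠ 0 := by intro h; apply haux; linear_combination h
  have e4 : ((u 1) ^ (d * (-1 / 2))) ^ 2 = (u 1) ^ (-d) := by
    rw [sq, ← Real.rpow_add hu]; ring_nf
  have hT : (!![1, 0, 0; 0, b, a; 0, c, 0] : Matrix (Fin 3) (Fin 3) ℝ)ᵀ
      = !![1, 0, 0; 0, b, c; 0, a, 0] := by
    ext i j; fin_cases i <;> fin_cases j <;> rfl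
  rw [hT]
  ext i j
  fin_cases i <;> fin_cases j <;>
    simp [Matrix.mul_apply, Fin.sum_univ_three, Matrix.vecHead, Matrix.vecTail,
      hb, ha, hc, e1, e2]
  all_goals try ring
  all_goals field_simp [haux, haux2, haux3]
  all_goals try ring
  · field_simp; ring
  · simp only [e4]
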